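/- Let A be a nonempty set, 1 ≤ p < ∞, and let φ : ℓ∞(A) → ℝ be a bounded linear functional. Let h : A → ℝ be given by h(a) := φ(e_a), where e_a ∈ ℓ∞(A) is the indicator function of {a}, and assume h is absolutely summable. Let B denote the closed unit ball of ℓ∞(A) and let ξ : B → ℝ be continuous with respect to the topology of pointwise convergence on B. If ξ(x) ≤ |φ(|x|^p)|^{1/p} for every x ∈ B (where |x|^p ∈ ℓ∞(A) is the function a ↦ |x(a)|^p), then ξ(x) ≤ |Σ_{a∈A} h(a)·|x(a)|^p|^{1/p} for every x ∈ B. -/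

import Mathlib

open scoped ENNReal

/-- The pointwise `p`-th power of the absolute value, `|x|^p`, as an element of `ℓ∞(A)`. -/
noncomputable def absRpow {A : Type*} (p : ℝ) (hp : 0 ≤ p)
    (x : lp (fun _ : A => ℝ) ∞) : lp (fun _ : A => ℝ) ∞ :=
  ⟨fun a => |x a| ^ p, by
    apply memℓp_infty
    refine ⟨‖x‖ ^ p, ?_⟩
    rintro r ⟨a, rfl⟩
    have h1 : |x a| ≤ ‖x‖ := by
      have := lp.norm_apply_le_norm (p := ∞) (by norm_num) x a
      rwa [Real.norm_eq_abs] at this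
    have h2 := Real.rpow_le_rpow (abs_nonneg (x a)) h1 hp
    calc ‖|x a| ^ p‖ = |x a| ^ p := by
            rw [Real.norm_eq_abs, abs_of_nonneg (Real.rpow_nonneg (abs_nonneg (x a)) p)]
      _ ≤ ‖x‖ ^ p := h2⟩

/-- The indicator function `e_a` of the singleton `{a}`, as an element of `ℓ∞(A)`. -/
noncomputable def eSingle (A : Type*) (a : A) : lp (fun _ : A => ℝ) ∞ :=
  haveI := Classical.decEq A
  lp.single ∞ a (1 : ℝ)

/-- The closed unit ball of `ℓ∞(A)`, equipped with the topology of pointwise convergence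
(equivalently, the weak* topology from the identification `ℓ∞(A) = ℓ₁(A)*`). -/
def ballPtwise (A : Type*) : Type _ := {x : lp (fun _ : A => ℝ) ∞ // ‖x‖ ≤ 1}

instance (A : Type*) : TopologicalSpace (ballPtwise A) :=
  TopologicalSpace.induced (fun x : ballPtwise A => (x.1 : ∀ _ : A, ℝ)) Pi.topologicalSpace

/-- **Lemma.** Let `φ` be a bounded linear functional on `ℓ∞(A)` whose "atomic part"
`h(a) = φ(e_a)` is absolutely summable, and let `ξ` be a function on the closed unit ball of
`ℓ∞(A)` which is continuous for the topology of pointwise convergence. If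
`ξ(x) ≤ |φ(|x|^p)|^{1/p}` on the ball, then also `ξ(x) ≤ |Σ_{a∈A} h(a)|x(a)|^p|^{1/p}`
on the ball. -/
theorem continuity_reduces_to_atomic_part
    (A : Type*) [Nonempty A] (p : ℝ) (hp : 1 ≤ p)
    (φ : lp (fun _ : A => ℝ) ∞ →L[ℝ] ℝ)
    (h : A → ℝ) (hdef : ∀ a : A, h a = φ (eSingle A a))
    (hsum : Summable fun a => |h a|)
    (ξ : lp (fun _ : A => ℝ) ∞ → ℝ)
    (hcont : Continuous fun x : ballPtwise A => ξ x.1)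
    (hle : ∀ x : lp (fun _ : A => ℝ) ∞, ‖x‖ ≤ 1 →
      ξ x ≤ |φ (absRpow p (zero_le_one.trans hp) x)| ^ (1 / p)) :
    ∀ x : lp (fun _ : A => ℝ) ∞, ‖x‖ ≤ 1 →
      ξ x ≤ |∑' a : A, h a * |x a| ^ p| ^ (1 / p) := by
  classical
  intro x hx
  have hp0 : (0:ℝ) < p := lt_of_lt_of_le zero_lt_one hp
  have hxa : ∀ a : A, |x a| ≤ 1 := by
    intro a
    have := lp.norm_apply_le_norm (p := ∞) (by norm_num) x a
    rw [Real.norm_eq_abs] at this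
    exact this.trans hx
  have heS : ∀ a b : A, (eSingle A a) b = if b = a then (1:ℝ) else 0 := by
    intro a b
    by_cases hba : b = a
    · rw [if_pos hba]; subst hba; exact lp.single_apply_self _ _ _
    · rw [if_neg hba]; exact lp.single_apply_ne _ _ _ hba
  -- truncations
  set trunc : Finset A → lp (fun _ : A => ℝ) ∞ :=
    fun F => ∑ a ∈ F, (x a) • eSingle A a with htrunc
  have htrunc_apply : ∀ (F : Finset A) (b : A),
      trunc F b = if b ∈ F then x b else 0 := by
    intro F b
    rw [htrunc]
    simp only [lp.coeFn_sum, Finset.sum_apply, lp.coeFn_smul, Pi.smul_apply,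
      smul_eq_mul, heS, mul_ite, mul_one, mul_zero]
    exact Finset.sum_ite_eq F b (fun a => x a)
  have hball : ∀ F : Finset A, ‖trunc F‖ ≤ 1 := by
    intro F
    apply lp.norm_le_of_forall_le zero_le_one
    intro b
    rw [Real.norm_eq_abs, htrunc_apply]
    split
    · exact hxa b
    · simp
  -- value of φ on truncations
  have hφ : ∀ F : Finset A,
      φ (absRpow p (zero_le_one.trans hp) (trunc F)) = ∑ a ∈ F, h a * |x a| ^ p := by
    intro F
    have heq : absRpow p (zero_le_one.trans hp) (trunc F)
        = ∑ a ∈ F, (|x a| ^ p) • eSingle A a := by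
      apply lp.ext
      funext b
      have h1 : absRpow p (zero_le_one.trans hp) (trunc F) b = |trunc F b| ^ p := rfl
      rw [h1, htrunc_apply]
      simp only [lp.coeFn_sum, Finset.sum_apply, lp.coeFn_smul, Pi.smul_apply,
        smul_eq_mul, heS, mul_ite, mul_one, mul_zero]
      rw [Finset.sum_ite_eq F b (fun a => |x a| ^ p)]
      by_cases hb : b ∈ F
      · rw [if_pos hb, if_pos hb]
      · rw [if_neg hb, if_neg hb, abs_zero, Real.zero_rpow hp0.ne']
    rw [heq, map_sum]
    refine Finset.sum_congr rfl fun a _ => ?_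
    rw [map_smul, smul_eq_mul, ← hdef a, mul_comm]
  -- summability
  set f : A → ℝ := fun a => h a * |x a| ^ p with hf
  have hfs : Summable f := by
    apply Summable.of_norm_bounded hsum
    intro a
    rw [Real.norm_eq_abs, hf, abs_mul]
    have h1 : |x a| ^ p ≤ 1 :=
      Real.rpow_le_one (abs_nonneg _) (hxa a) hp0.le
    have h2 : |(|x a| ^ p)| = |x a| ^ p :=
      abs_of_nonneg (Real.rpow_nonneg (abs_nonneg _) p)
    calc |h a| * |(|x a| ^ p)| ≤ |h a| * 1 := by
          rw [h2]; exact mul_le_mul_of_nonneg_left h1 (abs_nonneg _)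
      _ = |h a| := mul_one _
  -- RHS tendsto
  have hR : Filter.Tendsto (fun F : Finset A => |∑ a ∈ F, f a| ^ (1/p))
      Filter.atTop (nhds (|∑' a, f a| ^ (1/p))) := by
    have hc : ContinuousAt (fun t : ℝ => |t| ^ (1/p)) (∑' a, f a) := by
      exact (Real.continuousAt_rpow_const _ _
        (Or.inr (by positivity))).comp continuous_abs.continuousAt
    exact hc.tendsto.comp hfs.hasSum
  -- LHS tendsto
  have hL : Filter.Tendsto (fun F : Finset A => ξ (trunc F))
      Filter.atTop (nhds (ξ x)) := by
    have htend : Filter.Tendsto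
        (fun F : Finset A => (show ballPtwise A from ⟨trunc F, hball F⟩))
        Filter.atTop (nhds (show ballPtwise A from ⟨x, hx⟩)) := by
      have hind : Topology.IsInducing
          (fun x : ballPtwise A => (x.1 : ∀ _ : A, ℝ)) := ⟨rfl⟩
      rw [hind.tendsto_nhds_iff, tendsto_pi_nhds]
      intro a
      apply Filter.Tendsto.congr' _ tendsto_const_nhds
      filter_upwards [Filter.eventually_ge_atTop ({a} : Finset A)] with F hF
      have ha : a ∈ F := hF (Finset.mem_singleton_self a)
      simp only [Function.comp]
      rw [htrunc_apply, if_pos ha]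
    exact (hcont.tendsto _).comp htend
  -- conclude
  have hineq : ∀ F : Finset A, ξ (trunc F) ≤ |∑ a ∈ F, f a| ^ (1/p) := by
    intro F
    have := hle (trunc F) (hball F)
    rwa [hφ F] at this
  exact le_of_tendsto_of_tendsto' hL hR hineq
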